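/- Let l be a positive integer. The group Γ_{2l,π} is torsion-free: if γ ∈ Γ_{2l,π} satisfies γ^m = id for some positive integer m, then γ = id. -/

import Mathlib

noncomputable section

abbrev H3 := ℝ × ℝ × ℝ

/-- polarized Heisenberg multiplication -/
def Hmul (a b : H3) : H3 := (a.1 + b.1, a.2.1 + b.2.1, a.2.2 + b.2.2 + a.1 * b.2.1)

/-- left translation L_γ : h ↦ γ ⋆ h as a bijection of ℍ -/
def Ltrans (γ : H3) : Equiv.Perm H3 where
  toFun x := Hmul γ x
  invFun x := (x.1 - γ.1, x.2.1 - γ.2.1, x.2.2 - γ.2.2 - γ.1 * (x.2.1 - γ.2.1))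
  left_inv := by
    rintro ⟨a, b, c⟩
    simp only [Hmul, Prod.mk.injEq]
    refine ⟨by ring, by ring, by ring⟩
  right_inv := by
    rintro ⟨a, b, c⟩
    simp only [Hmul, Prod.mk.injEq]
    refine ⟨by ring, by ring, by ring⟩

/-- the map φ(p,q,s) = (−p, −q, s + 1/2) as a bijection of ℍ -/
def phiPerm : Equiv.Perm H3 where
  toFun x := (-x.1, -x.2.1, x.2.2 + 1 / 2)
  invFun x := (-x.1, -x.2.1, x.2.2 - 1 / 2)
  left_inv := by
    rintro ⟨a, b, c⟩
    simp only [Prod.mk.injEq]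
    refine ⟨by ring, by ring, by ring⟩
  right_inv := by
    rintro ⟨a, b, c⟩
    simp only [Prod.mk.injEq]
    refine ⟨by ring, by ring, by ring⟩

/-- the lattice N_{2l} = ℤ × 2lℤ × ℤ -/
def N2l (l : ℕ) : Set H3 :=
  {x | ∃ a b c : ℤ, x = ((a : ℝ), 2 * (l : ℝ) * (b : ℝ), (c : ℝ))}

/-- the Heisenberg Bieberbach group Γ_{2l,π}, generated by translations by N_{2l} and φ -/
def Gamma2lpi (l : ℕ) : Subgroup (Equiv.Perm H3) :=
  Subgroup.closure ((Ltrans '' N2l l) ∪ {phiPerm})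

lemma Ltrans_apply (v x : H3) : Ltrans v x = Hmul v x := rfl

lemma phiPerm_apply (x : H3) : phiPerm x = (-x.1, -x.2.1, x.2.2 + 1 / 2) := rfl

lemma Ltrans_mul (u v : H3) : Ltrans u * Ltrans v = Ltrans (Hmul u v) := by
  apply Equiv.ext
  rintro ⟨p, q, s⟩
  simp only [Equiv.Perm.mul_apply, Ltrans_apply, Hmul, Prod.mk.injEq]
  refine ⟨by ring, by ring, by ring⟩

lemma Ltrans_zero : Ltrans ((0 : ℝ), (0 : ℝ), (0 : ℝ)) = 1 := by
  apply Equiv.ext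
  rintro ⟨p, q, s⟩
  simp only [Ltrans_apply, Hmul, Equiv.Perm.one_apply, Prod.mk.injEq]
  refine ⟨by ring, by ring, by ring⟩

lemma Ltrans_zero' : Ltrans (0 : H3) = 1 := Ltrans_zero

lemma phi_Ltrans (v : H3) :
    phiPerm * Ltrans v = Ltrans (-v.1, -v.2.1, v.2.2) * phiPerm := by
  apply Equiv.ext
  rintro ⟨p, q, s⟩
  simp only [Equiv.Perm.mul_apply, Ltrans_apply, phiPerm_apply, Hmul, Prod.mk.injEq]
  refine ⟨by ring, by ring, by ring⟩

lemma phi_sq : phiPerm * phiPerm = Ltrans ((0 : ℝ), (0 : ℝ), (1 : ℝ)) := by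
  apply Equiv.ext
  rintro ⟨p, q, s⟩
  simp only [Equiv.Perm.mul_apply, Ltrans_apply, phiPerm_apply, Hmul, Prod.mk.injEq]
  refine ⟨by ring, by ring, by ring⟩

lemma L_mul_Lphi (u v : H3) :
    Ltrans u * (Ltrans v * phiPerm) = Ltrans (Hmul u v) * phiPerm := by
  rw [← mul_assoc, Ltrans_mul]

lemma Lphi_mul_L (u v : H3) :
    (Ltrans u * phiPerm) * Ltrans v
      = Ltrans (Hmul u (-v.1, -v.2.1, v.2.2)) * phiPerm := by
  rw [mul_assoc, phi_Ltrans, ← mul_assoc, Ltrans_mul]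

lemma Lphi_mul_Lphi (u v : H3) :
    (Ltrans u * phiPerm) * (Ltrans v * phiPerm)
      = Ltrans (Hmul (Hmul u (-v.1, -v.2.1, v.2.2)) ((0 : ℝ), (0 : ℝ), (1 : ℝ))) := by
  rw [← mul_assoc, Lphi_mul_L, mul_assoc, phi_sq, Ltrans_mul]

/-- (L_n φ)² is a central translation. -/
lemma Lphi_sq (v : H3) :
    (Ltrans v * phiPerm) * (Ltrans v * phiPerm)
      = Ltrans ((0 : ℝ), (0 : ℝ), 2 * v.2.2 + 1 - v.1 * v.2.1) := by
  rw [Lphi_mul_Lphi]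
  congr 1
  simp only [Hmul, Prod.mk.injEq]
  refine ⟨by ring, by ring, by ring⟩

lemma pow_fst (v : H3) (m : ℕ) :
    ((Ltrans v ^ m) ((0 : ℝ), (0 : ℝ), (0 : ℝ))).1 = m * v.1 := by
  induction m with
  | zero => simp
  | succ n ih =>
    rw [pow_succ', Equiv.Perm.mul_apply]
    set w := (Ltrans v ^ n) ((0 : ℝ), (0 : ℝ), (0 : ℝ)) with hw
    rw [Ltrans_apply]
    show v.1 + w.1 = _
    rw [ih]
    push_cast
    ring

lemma pow_central (y z : ℝ) (m : ℕ) :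
    (Ltrans ((0 : ℝ), y, z) ^ m) ((0 : ℝ), (0 : ℝ), (0 : ℝ))
      = ((0 : ℝ), m * y, m * z) := by
  induction m with
  | zero => simp
  | succ n ih =>
    rw [pow_succ', Equiv.Perm.mul_apply, ih, Ltrans_apply]
    show ((0 : ℝ) + 0, y + n * y, z + n * z + 0 * (n * y)) = _
    push_cast
    refine Prod.ext (by ring) (Prod.ext (by ring) (by ring))

/-- the group Γ_{2l,π} is torsion-free. -/
theorem Gamma2lpi_torsionFree (l : ℕ) (hl : 0 < l) :
    ∀ γ ∈ Gamma2lpi l, ∀ m : ℕ, 0 < m → γ ^ m = 1 → γ = 1 := by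
  intro γ hγ
  -- structure of elements
  have key : (∃ a b c : ℤ, γ = Ltrans ((a : ℝ), 2 * (l : ℝ) * (b : ℝ), (c : ℝ))) ∨
      (∃ a b c : ℤ, γ = Ltrans ((a : ℝ), 2 * (l : ℝ) * (b : ℝ), (c : ℝ)) * phiPerm) := by
    induction hγ using Subgroup.closure_induction with
    | mem x hx =>
      rcases hx with ⟨y, ⟨a, b, c, rfl⟩, rfl⟩ | hx
      · exact Or.inl ⟨a, b, c, rfl⟩
      · refine Or.inr ⟨0, 0, 0, ?_⟩
        simp only [Set.mem_singleton_iff] at hx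
        subst hx
        norm_num [Ltrans_zero', Ltrans_zero]
    | one => exact Or.inl ⟨0, 0, 0, by norm_num [Ltrans_zero', Ltrans_zero]⟩
    | mul x y hx hy ihx ihy =>
      rcases ihx with ⟨a, b, c, rfl⟩ | ⟨a, b, c, rfl⟩ <;>
        rcases ihy with ⟨a', b', c', rfl⟩ | ⟨a', b', c', rfl⟩
      · rw [Ltrans_mul]
        refine Or.inl ⟨a + a', b + b', c + c' + 2 * l * (a * b'), ?_⟩
        congr 1
        simp only [Hmul, Prod.mk.injEq]
        push_cast
        refine ⟨by ring, by ring, by ring⟩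
      · rw [L_mul_Lphi]
        refine Or.inr ⟨a + a', b + b', c + c' + 2 * l * (a * b'), ?_⟩
        congr 2
        simp only [Hmul, Prod.mk.injEq]
        push_cast
        refine ⟨by ring, by ring, by ring⟩
      · rw [Lphi_mul_L]
        refine Or.inr ⟨a - a', b - b', c + c' - 2 * l * (a * b'), ?_⟩
        congr 2
        simp only [Hmul, Prod.mk.injEq]
        push_cast
        refine ⟨by ring, by ring, by ring⟩
      · rw [Lphi_mul_Lphi]
        refine Or.inl ⟨a - a', b - b', c + c' + 1 - 2 * l * (a * b'), ?_⟩
        congr 1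
        simp only [Hmul, Prod.mk.injEq]
        push_cast
        refine ⟨by ring, by ring, by ring⟩
    | inv x hx ihx =>
      rcases ihx with ⟨a, b, c, rfl⟩ | ⟨a, b, c, rfl⟩
      · refine Or.inl ⟨-a, -b, -c + 2 * l * (a * b), ?_⟩
        rw [inv_eq_of_mul_eq_one_right (b := Ltrans (((-a : ℤ) : ℝ),
          2 * (l : ℝ) * ((-b : ℤ) : ℝ), ((-c + 2 * l * (a * b) : ℤ) : ℝ))) ?_]
        rw [Ltrans_mul, ← Ltrans_zero]
        congr 1
        simp only [Hmul, Prod.mk.injEq]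
        push_cast
        refine ⟨by ring, by ring, by ring⟩
      · -- inverse of g = L_n φ equals g * (g²)⁻¹
        set n : H3 := ((a : ℝ), 2 * (l : ℝ) * (b : ℝ), (c : ℝ)) with hn
        set t : ℝ := 2 * (c : ℝ) + 1 - (a : ℝ) * (2 * (l : ℝ) * (b : ℝ)) with ht
        have hsq : (Ltrans n * phiPerm) * (Ltrans n * phiPerm)
            = Ltrans ((0 : ℝ), (0 : ℝ), t) := Lphi_sq n
        have hinv : (Ltrans ((0 : ℝ), (0 : ℝ), t))⁻¹
            = Ltrans ((0 : ℝ), (0 : ℝ), -t) := by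
          rw [inv_eq_of_mul_eq_one_right]
          rw [Ltrans_mul, ← Ltrans_zero]
          congr 1
          simp only [Hmul, Prod.mk.injEq]
          refine ⟨by ring, by ring, by ring⟩
        have hginv : (Ltrans n * phiPerm)⁻¹
            = (Ltrans n * phiPerm) * Ltrans ((0 : ℝ), (0 : ℝ), -t) := by
          rw [← hinv, ← hsq]
          group
        rw [hginv, Lphi_mul_L]
        refine Or.inr ⟨a, b, c - (2 * c + 1) + 2 * l * (a * b), ?_⟩
        congr 2
        simp only [Hmul, hn, ht, Prod.mk.injEq]
        push_cast
        refine ⟨by ring, by ring, by ring⟩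
  intro m hm h1
  have hm' : (m : ℝ) ≠ 0 := Nat.cast_ne_zero.mpr hm.ne'
  rcases key with ⟨a, b, c, rfl⟩ | ⟨a, b, c, rfl⟩
  · -- translation case
    have h0 := congrArg (fun f : Equiv.Perm H3 => (f ((0:ℝ),(0:ℝ),(0:ℝ))).1) h1
    rw [pow_fst] at h0
    have ha : (a : ℝ) = 0 := by
      rcases mul_eq_zero.mp h0 with h | h
      · exact absurd h hm'
      · exact h
    rw [ha] at h1 ⊢
    have h0' := congrArg (fun f : Equiv.Perm H3 => f ((0:ℝ),(0:ℝ),(0:ℝ))) h1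
    rw [pow_central] at h0'
    have hb : 2 * (l : ℝ) * (b : ℝ) = 0 := by
      have := congrArg (fun p : H3 => p.2.1) h0'
      simp only [Equiv.Perm.one_apply] at this
      rcases mul_eq_zero.mp this with h | h
      · exact absurd h hm'
      · exact h
    have hc : (c : ℝ) = 0 := by
      have := congrArg (fun p : H3 => p.2.2) h0'
      simp only [Equiv.Perm.one_apply] at this
      rcases mul_eq_zero.mp this with h | h
      · exact absurd h hm'
      · exact h
    rw [hb, hc, Ltrans_zero]
  · -- φ case: impossible
    exfalso
    set t : ℝ := 2 * (c : ℝ) + 1 - (a : ℝ) * (2 * (l : ℝ) * (b : ℝ)) with ht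
    have hsq := Lphi_sq ((a : ℝ), 2 * (l : ℝ) * (b : ℝ), (c : ℝ))
    have h2 : (Ltrans ((0 : ℝ), (0 : ℝ), t)) ^ m = 1 := by
      rw [← hsq, ← pow_two, ← pow_mul, mul_comm 2 m, pow_mul, h1, one_pow]
    have h0 := congrArg (fun f : Equiv.Perm H3 => (f ((0:ℝ),(0:ℝ),(0:ℝ))).2.2) h2
    rw [pow_central] at h0
    simp only [Equiv.Perm.one_apply] at h0
    have htz : t = 0 := by
      rcases mul_eq_zero.mp h0 with h | h
      · exact absurd h hm'
      · exact h
    rw [ht] at htz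
    have hcast : ((2 * c + 1 - 2 * (l * (a * b)) : ℤ) : ℝ) = 0 := by
      push_cast
      linarith
    have hz : ( 2 * c + 1 - 2 * (l * (a * b)) : ℤ) = 0 := by exact_mod_cast hcast
    omega

end
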